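/- The symmetrisation maps sym_• form a chain map from the singular chain complex C_•(X;ℝ) to itself, i.e., ∂ ∘ sym_n = sym_{n-1} ∘ ∂ for all n ≥ 1. -/

import Mathlib

open Finset

noncomputable section SingularChains

/-- The affine map `Δ^k → Δ^n` extending the vertex map `π`. -/
def affMap {k n : ℕ} (π : Fin (k + 1) → Fin (n + 1)) :
    C(stdSimplex ℝ (Fin (k + 1)), stdSimplex ℝ (Fin (n + 1))) where
  toFun x := ⟨fun i => ∑ l ∈ Finset.univ.filter (fun l => π l = i), (x : Fin (k + 1) → ℝ) l, by
    constructor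
    · intro i
      exact Finset.sum_nonneg fun l _ => x.2.1 l
    · rw [← x.2.2]
      exact Finset.sum_fiberwise _ _ _⟩
  continuous_toFun := by
    apply Continuous.subtype_mk
    exact continuous_pi fun i =>
      continuous_finset_sum _ fun l _ => (continuous_apply l).comp continuous_subtype_val

variable {X : Type} [TopologicalSpace X]

/-- Singular `n`-simplices in `X`. -/
abbrev Sing (n : ℕ) (X : Type) [TopologicalSpace X] := C(stdSimplex ℝ (Fin (n + 1)), X)

/-- Singular `n`-chains with real coefficients. -/
abbrev Chain (n : ℕ) (X : Type) [TopologicalSpace X] := Sing n X →₀ ℝ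

/-- The `j`-th face map `∂ⱼ : C_{n+1}(X;ℝ) → C_n(X;ℝ)`. -/
def face {n : ℕ} (j : Fin (n + 2)) : Chain (n + 1) X →ₗ[ℝ] Chain n X :=
  Finsupp.lmapDomain ℝ ℝ fun σ => σ.comp (affMap (Fin.succAbove j))

/-- The singular boundary operator `∂ = Σⱼ (-1)ʲ ∂ⱼ`. -/
def bdry (n : ℕ) : Chain (n + 1) X →ₗ[ℝ] Chain n X :=
  ∑ j : Fin (n + 2), ((-1 : ℝ) ^ (j : ℕ)) • face j

/-- The symmetrisation of a singular simplex. -/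
def symSimplex {n : ℕ} (σ : Sing n X) : Chain n X :=
  (((n + 1).factorial : ℝ))⁻¹ •
    ∑ π : Equiv.Perm (Fin (n + 1)),
      ((Equiv.Perm.sign π : ℤ) : ℝ) • Finsupp.single (σ.comp (affMap π)) (1 : ℝ)

/-- The symmetrisation map `sym_n : C_n(X;ℝ) → C_n(X;ℝ)`. -/
def symCh (n : ℕ) : Chain n X →ₗ[ℝ] Chain n X :=
  Finsupp.lsum ℝ fun σ => LinearMap.toSpanSingleton ℝ _ (symSimplex σ)

/-- The ℓ¹-norm of a singular chain. -/
def l1 {n : ℕ} (c : Chain n X) : ℝ := ∑ σ ∈ c.support, |c σ|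

/-- Cycles. -/
def cyc (X : Type) [TopologicalSpace X] : (n : ℕ) → Submodule ℝ (Chain n X)
  | 0 => ⊤
  | n + 1 => LinearMap.ker (bdry n)

/-- Boundaries. -/
def bdries (X : Type) [TopologicalSpace X] (n : ℕ) : Submodule ℝ (Chain n X) :=
  LinearMap.range (bdry n)

/-- A chain is normalised if all but the last face map vanish on it. -/
def IsNormalised : {n : ℕ} → Chain n X → Prop
  | 0, _ => True
  | n + 1, c => ∀ j : Fin (n + 2), j ≠ Fin.last (n + 1) → face j c = 0

/-- The cyclic permutation `τⱼ = (j j-1 ⋯ 1 0)`. -/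
def tau (n : ℕ) (j : Fin (n + 1)) : Equiv.Perm (Fin (n + 1)) := (Fin.cycleRange j)⁻¹

-- auxiliary lemmas

lemma affMap_comp {k m n : ℕ} (f : Fin (m + 1) → Fin (n + 1)) (g : Fin (k + 1) → Fin (m + 1)) :
    (affMap f).comp (affMap g) = affMap (f ∘ g) := by
  ext x i
  show ∑ l ∈ univ.filter (fun l => f l = i), ∑ t ∈ univ.filter (fun t => g t = l),
      (x : Fin (k+1) → ℝ) t = ∑ t ∈ univ.filter (fun t => f (g t) = i), (x : Fin (k+1) → ℝ) t
  rw [Finset.sum_fiberwise_eq_sum_filter univ (univ.filter (fun l => f l = i)) g]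
  congr 1
  ext t
  simp

/-- Extension of a permutation of `Fin (n+1)` to `Fin (n+2)` fixing `0`. -/
def permExt {n : ℕ} (ρ : Equiv.Perm (Fin (n + 1))) : Equiv.Perm (Fin (n + 2)) :=
  Equiv.Perm.decomposeFin.symm (0, ρ)

lemma permExt_zero {n : ℕ} (ρ : Equiv.Perm (Fin (n + 1))) : permExt ρ 0 = 0 :=
  Equiv.Perm.decomposeFin_symm_apply_zero 0 ρ

lemma permExt_succ {n : ℕ} (ρ : Equiv.Perm (Fin (n + 1))) (k : Fin (n + 1)) :
    permExt ρ k.succ = (ρ k).succ := by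
  simp [permExt, Equiv.Perm.decomposeFin_symm_apply_succ]

lemma permExt_sign {n : ℕ} (ρ : Equiv.Perm (Fin (n + 1))) :
    Equiv.Perm.sign (permExt ρ) = Equiv.Perm.sign ρ := by
  simp [permExt, Equiv.Perm.decomposeFin.symm_sign]

lemma decomposeFin_fst {n : ℕ} (q : Equiv.Perm (Fin (n + 1))) :
    (Equiv.Perm.decomposeFin q).1 = q 0 := by
  conv_rhs => rw [← Equiv.Perm.decomposeFin.symm_apply_apply q]
  rw [show Equiv.Perm.decomposeFin q =
    ((Equiv.Perm.decomposeFin q).1, (Equiv.Perm.decomposeFin q).2) from rfl]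
  rw [Equiv.Perm.decomposeFin_symm_apply_zero]

def permDecomp (n : ℕ) : Fin (n + 2) × Equiv.Perm (Fin (n + 1)) ≃ Equiv.Perm (Fin (n + 2)) where
  toFun p := (Fin.cycleRange p.1)⁻¹ * permExt p.2
  invFun π := (π 0, (Equiv.Perm.decomposeFin (Fin.cycleRange (π 0) * π)).2)
  left_inv := by
    rintro ⟨j, ρ⟩
    have h0 : ((Fin.cycleRange j)⁻¹ * permExt ρ) 0 = j := by
      rw [Equiv.Perm.mul_apply, permExt_zero]
      exact Fin.cycleRange_symm_zero j
    simp only [h0, Prod.mk.injEq]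
    refine ⟨trivial, ?_⟩
    rw [← mul_assoc, mul_inv_cancel, one_mul]
    simp [permExt]
  right_inv := by
    intro π
    have h0 : (Fin.cycleRange (π 0) * π) 0 = 0 := by
      rw [Equiv.Perm.mul_apply]
      exact Fin.cycleRange_self (π 0)
    have h1 : (Equiv.Perm.decomposeFin (Fin.cycleRange (π 0) * π)).1 = 0 := by
      rw [decomposeFin_fst, h0]
    have key : permExt (Equiv.Perm.decomposeFin (Fin.cycleRange (π 0) * π)).2
        = Fin.cycleRange (π 0) * π := by
      have h2 : ((0 : Fin (n + 2)), (Equiv.Perm.decomposeFin (Fin.cycleRange (π 0) * π)).2)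
          = Equiv.Perm.decomposeFin (Fin.cycleRange (π 0) * π) := Prod.ext h1.symm rfl
      rw [permExt, h2]
      exact Equiv.Perm.decomposeFin.symm_apply_apply _
    show (Fin.cycleRange (π 0))⁻¹ * permExt (Equiv.Perm.decomposeFin (Fin.cycleRange (π 0) * π)).2 = π
    rw [key, ← mul_assoc, inv_mul_cancel, one_mul]

lemma permDecomp_sign {n : ℕ} (j : Fin (n + 2)) (ρ : Equiv.Perm (Fin (n + 1))) :
    ((Equiv.Perm.sign (permDecomp n (j, ρ)) : ℤ) : ℝ)
      = (-1 : ℝ) ^ (j : ℕ) * ((Equiv.Perm.sign ρ : ℤ) : ℝ) := by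
  have : Equiv.Perm.sign (permDecomp n (j, ρ)) = (-1) ^ (j : ℕ) * Equiv.Perm.sign ρ := by
    simp [permDecomp, permExt_sign, Fin.sign_cycleRange, inv_pow]
  rw [this]
  push_cast
  ring

lemma comp_succAbove {n : ℕ} (j : Fin (n + 2)) (π : Equiv.Perm (Fin (n + 2))) :
    ⇑(π * (Fin.cycleRange j)⁻¹) ∘ Fin.succ = ⇑π ∘ Fin.succAbove j := by
  funext k
  rw [Function.comp_apply, Function.comp_apply, Equiv.Perm.mul_apply]
  rw [show (Fin.cycleRange j)⁻¹ k.succ = Fin.succAbove j k from Fin.cycleRange_symm_succ j k]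

lemma succAbove_comp {n : ℕ} (j : Fin (n + 2)) (ρ : Equiv.Perm (Fin (n + 1))) :
    Fin.succAbove j ∘ ⇑ρ = ⇑(permDecomp n (j, ρ)) ∘ Fin.succ := by
  funext k
  show Fin.succAbove j (ρ k) = ((Fin.cycleRange j)⁻¹ * permExt ρ) k.succ
  rw [Equiv.Perm.mul_apply, permExt_succ]
  exact (Fin.cycleRange_symm_succ j (ρ k)).symm

lemma sign_mul_cycleRange_inv {n : ℕ} (j : Fin (n + 2)) (π : Equiv.Perm (Fin (n + 2))) :
    ((Equiv.Perm.sign (π * (Fin.cycleRange j)⁻¹) : ℤ) : ℝ)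
      = (-1 : ℝ) ^ (j : ℕ) * ((Equiv.Perm.sign π : ℤ) : ℝ) := by
  have h : Equiv.Perm.sign (π * (Fin.cycleRange j)⁻¹)
      = (-1) ^ (j : ℕ) * Equiv.Perm.sign π := by
    simp [map_mul, Fin.sign_cycleRange, inv_pow, mul_comm]
  rw [h]
  push_cast
  ring

lemma face_single {m : ℕ} (j : Fin (m + 2)) (τ : Sing (m + 1) X) (b : ℝ) :
    face j (Finsupp.single τ b) = Finsupp.single (τ.comp (affMap (Fin.succAbove j))) b := by
  simp [face]

lemma bdry_single {m : ℕ} (τ : Sing (m + 1) X) :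
    bdry m (Finsupp.single τ (1 : ℝ))
      = ∑ j : Fin (m + 2), ((-1 : ℝ) ^ (j : ℕ)) •
          Finsupp.single (τ.comp (affMap (Fin.succAbove j))) (1 : ℝ) := by
  rw [bdry, LinearMap.sum_apply]
  refine Finset.sum_congr rfl fun j _ => ?_
  rw [LinearMap.smul_apply, face_single]

lemma symCh_single {m : ℕ} (τ : Sing m X) (b : ℝ) :
    symCh m (Finsupp.single τ b) = b • symSimplex τ := by
  simp [symCh]

lemma key (n : ℕ) (σ : Sing (n + 1) X) :
    bdry n (symSimplex σ) = symCh n (bdry n (Finsupp.single σ (1 : ℝ))) := by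
  set T : Chain n X := ∑ π : Equiv.Perm (Fin (n + 2)),
      ((Equiv.Perm.sign π : ℤ) : ℝ) •
        Finsupp.single (σ.comp (affMap (⇑π ∘ Fin.succ))) (1 : ℝ) with hT
  have lhs_eq : bdry n (symSimplex σ) = (((n + 2).factorial : ℝ))⁻¹ • ((n + 2) : ℝ) • T := by
    rw [symSimplex, map_smul, map_sum]
    have : ∀ π : Equiv.Perm (Fin (n + 2)),
        bdry n (((Equiv.Perm.sign π : ℤ) : ℝ) • Finsupp.single (σ.comp (affMap ⇑π)) (1 : ℝ))
          = ∑ j : Fin (n + 2), ((-1 : ℝ) ^ (j : ℕ) * ((Equiv.Perm.sign π : ℤ) : ℝ)) •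
              Finsupp.single (σ.comp (affMap (⇑π ∘ Fin.succAbove j))) (1 : ℝ) := by
      intro π
      rw [map_smul, bdry_single, Finset.smul_sum]
      refine Finset.sum_congr rfl fun j _ => ?_
      rw [ContinuousMap.comp_assoc, affMap_comp, smul_smul, mul_comm]
    rw [Finset.sum_congr rfl fun π _ => this π, Finset.sum_comm]
    congr 1
    have hstep : ∀ j : Fin (n + 2),
        (∑ π : Equiv.Perm (Fin (n + 2)), ((-1 : ℝ) ^ (j : ℕ) * ((Equiv.Perm.sign π : ℤ) : ℝ)) •
            Finsupp.single (σ.comp (affMap (⇑π ∘ Fin.succAbove j))) (1 : ℝ)) = T := by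
      intro j
      rw [hT]
      refine Fintype.sum_equiv (Equiv.mulRight (Fin.cycleRange j)⁻¹) _ _ fun π => ?_
      have h1 : ⇑(π * (Fin.cycleRange j)⁻¹) ∘ Fin.succ = ⇑π ∘ Fin.succAbove j :=
        comp_succAbove j π
      simp only [Equiv.coe_mulRight]
      rw [h1, sign_mul_cycleRange_inv]
    rw [Finset.sum_congr rfl fun j _ => hstep j, Finset.sum_const, Finset.card_univ,
      Fintype.card_fin]
    rw [← Nat.cast_smul_eq_nsmul ℝ]
    norm_num
  have rhs_eq : symCh n (bdry n (Finsupp.single σ (1 : ℝ)))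
      = (((n + 1).factorial : ℝ))⁻¹ • T := by
    rw [bdry_single, map_sum]
    have : ∀ j : Fin (n + 2),
        symCh n (((-1 : ℝ) ^ (j : ℕ)) •
            Finsupp.single (σ.comp (affMap (Fin.succAbove j))) (1 : ℝ))
          = (((n + 1).factorial : ℝ))⁻¹ •
              ∑ ρ : Equiv.Perm (Fin (n + 1)),
                ((-1 : ℝ) ^ (j : ℕ) * ((Equiv.Perm.sign ρ : ℤ) : ℝ)) •
                  Finsupp.single (σ.comp (affMap (Fin.succAbove j ∘ ⇑ρ))) (1 : ℝ) := by
      intro j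
      rw [map_smul, symCh_single, one_smul, symSimplex, smul_comm, Finset.smul_sum]
      congr 1
      refine Finset.sum_congr rfl fun ρ _ => ?_
      rw [ContinuousMap.comp_assoc, affMap_comp, smul_smul]
    rw [Finset.sum_congr rfl fun j _ => this j, ← Finset.smul_sum]
    congr 1
    rw [hT, ← Equiv.sum_comp (permDecomp n)
      (fun π : Equiv.Perm (Fin (n + 2)) => ((Equiv.Perm.sign π : ℤ) : ℝ) •
        Finsupp.single (σ.comp (affMap (⇑π ∘ Fin.succ))) (1 : ℝ)), Fintype.sum_prod_type]
    refine Finset.sum_congr rfl fun j _ => Finset.sum_congr rfl fun ρ _ => ?_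
    rw [succAbove_comp j ρ, permDecomp_sign j ρ]
  rw [lhs_eq, rhs_eq, smul_smul]
  congr 1
  have h1 : ((n + 2).factorial : ℝ) = ((n + 2) : ℝ) * ((n + 1).factorial : ℝ) := by
    rw [show n + 2 = (n + 1) + 1 from rfl, Nat.factorial_succ]
    push_cast
    ring
  have h2 : ((n + 1).factorial : ℝ) ≠ 0 := Nat.cast_ne_zero.2 (Nat.factorial_ne_zero _)
  have h3 : ((n + 2) : ℝ) ≠ 0 := by positivity
  field_simp [h1]
  exact h1.symm

end SingularChains

/-- Symmetrisation is a chain map: `∂ ∘ sym_{n+1} = sym_n ∘ ∂`. -/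
theorem bdry_comp_symm (X : Type) [TopologicalSpace X] (n : ℕ) :
    (bdry n (X := X)).comp (symCh (n + 1)) = (symCh n).comp (bdry n) := by
  refine Finsupp.lhom_ext fun σ b => ?_
  have hb : (Finsupp.single σ b : Chain (n + 1) X) = b • Finsupp.single σ (1 : ℝ) := by
    rw [Finsupp.smul_single, smul_eq_mul, mul_one]
  rw [LinearMap.comp_apply, LinearMap.comp_apply, hb, map_smul, map_smul, map_smul, map_smul]
  congr 1
  rw [symCh_single, one_smul]
  exact key n σ
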